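/- Let μ ∈ ℝ, φ ∈ [0,1] and σ > 0, and let {η_t}_{t≥1} be i.i.d. real random variables with law N(0, σ^2). For x ∈ ℝ define the iterates X_0(x) = x and X_{t+1}(x) = (1 + η_{t+1})·((1−φ)μ + φ·X_t(x)). Then for all x, x0 ∈ ℝ and t ≥ 0: E[(X_t(x) − X_t(x0))^2] = (φ^2(1 + σ^2))^t · (x − x0)^2. In particular, the geometric-moment contraction condition E[(X_t(x) − X_t(x0))^2] ≤ r^t (x − x0)^2 with r < 1 holds whenever φ < (1 + σ^2)^{−1/2}. -/

import Mathlib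

open MeasureTheory ProbabilityTheory Real
open scoped NNReal ENNReal

lemma int_exp_odd (b : ℝ) : ∫ x : ℝ, x * Real.exp (-b * x ^ 2) = 0 := by
  have h := MeasureTheory.integral_neg_eq_self
    (fun x : ℝ => x * Real.exp (-b * x ^ 2)) volume
  simp only [neg_sq, neg_mul, integral_neg] at h
  simp only [neg_mul]
  linarith

lemma int_exp_sq {b : ℝ} (hb : 0 < b) :
    ∫ x : ℝ, x ^ 2 * Real.exp (-b * x ^ 2) = Real.sqrt π / (2 * (b * Real.sqrt b)) := by
  have h1 : (fun x : ℝ => x ^ (2 : ℝ) * Real.exp (-b * x ^ (2 : ℝ))) =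
      fun x : ℝ => x ^ 2 * Real.exp (-b * x ^ 2) := by
    ext x
    rw [show (2 : ℝ) = ((2 : ℕ) : ℝ) by norm_num, Real.rpow_natCast]
  have h2 := integral_rpow_mul_exp_neg_mul_rpow (p := 2) (q := 2)
    (by norm_num) (by norm_num) hb
  rw [show (fun x : ℝ => x ^ (2 : ℝ) * Real.exp (-b * x ^ (2 : ℝ))) =
      (fun x : ℝ => x ^ 2 * Real.exp (-b * x ^ 2)) from h1] at h2
  have habs := integral_comp_abs (f := fun x : ℝ => x ^ 2 * Real.exp (-b * x ^ 2))
  simp only [sq_abs] at habs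
  rw [habs, h2]
  have hb32 : b ^ ((3 : ℝ) / 2) = b * Real.sqrt b := by
    rw [show (3 : ℝ) / 2 = 1 + 1 / 2 by norm_num, Real.rpow_add hb, Real.rpow_one,
      ← Real.sqrt_eq_rpow]
  rw [show (-((2 : ℝ) + 1) / 2) = -((3 : ℝ) / 2) by norm_num,
    show (((2 : ℝ) + 1) / 2) = 1 / 2 + 1 by norm_num,
    Real.Gamma_add_one (by norm_num), Real.Gamma_one_half_eq,
    Real.rpow_neg hb.le, hb32]
  have hbs : (0 : ℝ) < Real.sqrt b := Real.sqrt_pos.mpr hb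
  field_simp

lemma gaussian_one_add_sq_moment {v : ℝ≥0} (hv : v ≠ 0) :
    ∫ y : ℝ, (1 + y) ^ 2 ∂(gaussianReal 0 v) = 1 + (v : ℝ) := by
  have hvpos : (0 : ℝ) < (v : ℝ) := by
    exact_mod_cast pos_iff_ne_zero.mpr hv
  set b : ℝ := (2 * (v : ℝ))⁻¹ with hb_def
  have hb : 0 < b := by positivity
  rw [gaussianReal_of_var_ne_zero 0 hv]
  have hpdf : gaussianPDF 0 v =
      fun x => ((Real.toNNReal (gaussianPDFReal 0 v x) : ℝ≥0) : ℝ≥0∞) := rfl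
  rw [hpdf, integral_withDensity_eq_integral_smul
    ((measurable_gaussianPDFReal 0 v).real_toNNReal)]
  have hpt : ∀ x : ℝ, (Real.toNNReal (gaussianPDFReal 0 v x)) • (1 + x) ^ 2 =
      (Real.sqrt (2 * π * (v : ℝ)))⁻¹ * ((1 + x) ^ 2 * Real.exp (-b * x ^ 2)) := by
    intro x
    rw [NNReal.smul_def, Real.coe_toNNReal _ (gaussianPDFReal_nonneg 0 v x), smul_eq_mul]
    unfold gaussianPDFReal
    have hx : -(x - 0) ^ 2 / (2 * (v : ℝ)) = -b * x ^ 2 := by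
      rw [hb_def]
      field_simp
      ring
    rw [hx]
    ring
  simp_rw [hpt]
  rw [integral_const_mul]
  have hexpand : ∀ x : ℝ, (1 + x) ^ 2 * Real.exp (-b * x ^ 2) =
      Real.exp (-b * x ^ 2) +
        (2 * (x * Real.exp (-b * x ^ 2)) + x ^ 2 * Real.exp (-b * x ^ 2)) := by
    intro x; ring
  simp_rw [hexpand]
  have h1int : Integrable (fun x : ℝ => x * Real.exp (-b * x ^ 2)) :=
    integrable_mul_exp_neg_mul_sq hb
  have h2int : Integrable (fun x : ℝ => x ^ 2 * Real.exp (-b * x ^ 2)) := by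
    have := integrable_rpow_mul_exp_neg_mul_sq hb (s := 2) (by norm_num)
    have he : (fun x : ℝ => x ^ (2 : ℝ) * Real.exp (-b * x ^ 2)) =
        fun x : ℝ => x ^ 2 * Real.exp (-b * x ^ 2) := by
      ext x
      rw [show (2 : ℝ) = ((2 : ℕ) : ℝ) by norm_num, Real.rpow_natCast]
    rwa [he] at this
  have hc2 : Integrable (fun x : ℝ => 2 * (x * Real.exp (-b * x ^ 2))) := by
    exact h1int.const_mul 2
  have haux : Integrable (fun x : ℝ =>
      2 * (x * Real.exp (-b * x ^ 2)) + x ^ 2 * Real.exp (-b * x ^ 2)) := by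
    exact hc2.add h2int
  rw [integral_add (integrable_exp_neg_mul_sq hb) haux,
    integral_add hc2 h2int, integral_const_mul, int_exp_odd,
    int_exp_sq hb, integral_gaussian]
  -- algebra
  set u : ℝ := Real.sqrt (2 * (v : ℝ)) with hu_def
  have hu : 0 < u := Real.sqrt_pos.mpr (by positivity)
  have hu2 : u ^ 2 = 2 * (v : ℝ) := Real.sq_sqrt (by positivity)
  have hbu : b = (u ^ 2)⁻¹ := by rw [hb_def, hu2]
  have e1 : Real.sqrt (2 * π * (v : ℝ)) = Real.sqrt π * u := by
    rw [show 2 * π * (v : ℝ) = π * u ^ 2 by rw [hu2]; ring,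
      Real.sqrt_mul Real.pi_pos.le, Real.sqrt_sq hu.le]
  have e2 : Real.sqrt (π / b) = Real.sqrt π * u := by
    rw [show π / b = π * u ^ 2 by rw [hbu]; field_simp,
      Real.sqrt_mul Real.pi_pos.le, Real.sqrt_sq hu.le]
  have e3 : Real.sqrt b = u⁻¹ := by
    rw [hbu, Real.sqrt_inv, Real.sqrt_sq hu.le]
  have hv2 : (v : ℝ) = u ^ 2 / 2 := by rw [hu2]; ring
  rw [e1, e2, e3, hbu, hv2]
  have hπ : (0 : ℝ) < Real.sqrt π := Real.sqrt_pos.mpr Real.pi_pos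
  field_simp
  ring

/-- for the real-line GAR(1) recursion
`X_{t+1}(x) = (1 + η_{t+1})((1−φ)μ + φ X_t(x))` with i.i.d. `η_t ∼ N(0,σ²)`,
`E[(X_t(x) − X_t(x0))²] = (φ²(1+σ²))ᵗ (x − x0)²` for all `x, x0, t`; in particular the
geometric-moment contraction condition with rate `r = φ²(1+σ²) < 1` holds whenever
`φ < (1+σ²)^{−1/2}`. -/
theorem real_gar1_contraction
    (μ φ σ : ℝ) (hφ : φ ∈ Set.Icc (0:ℝ) 1) (hσ : 0 < σ)
    {A : Type*} [MeasurableSpace A] (P : Measure A) [IsProbabilityMeasure P]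
    (η : ℕ → A → ℝ) (hηmeas : ∀ t, Measurable (η t))
    (hηindep : iIndepFun η P)
    (hηlaw : ∀ t, Measure.map (η t) P = gaussianReal 0 (Real.toNNReal (σ ^ 2)))
    (Xit : ℕ → A → ℝ → ℝ)
    (hXit0 : ∀ a x, Xit 0 a x = x)
    (hXitS : ∀ t a x, Xit (t + 1) a x = (1 + η (t + 1) a) * ((1 - φ) * μ + φ * Xit t a x)) :
    (∀ (x x0 : ℝ) (t : ℕ),
      ∫ a, (Xit t a x - Xit t a x0) ^ 2 ∂P = (φ ^ 2 * (1 + σ ^ 2)) ^ t * (x - x0) ^ 2) ∧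
    (φ < (1 + σ ^ 2) ^ (-(1/2) : ℝ) → φ ^ 2 * (1 + σ ^ 2) < 1) := by
  have hσ2 : (0 : ℝ) < σ ^ 2 := by positivity
  have hv : Real.toNNReal (σ ^ 2) ≠ 0 := by
    intro h
    rw [Real.toNNReal_eq_zero] at h
    nlinarith
  have hcoe : ((Real.toNNReal (σ ^ 2)) : ℝ) = σ ^ 2 := Real.coe_toNNReal _ hσ2.le
  have hmom : ∀ s, ∫ a, (1 + η s a) ^ 2 ∂P = 1 + σ ^ 2 := by
    intro s
    have hmap := MeasureTheory.integral_map (μ := P) (hηmeas s).aemeasurable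
      (f := fun y : ℝ => (1 + y) ^ 2)
      (((measurable_const.add measurable_id).pow_const 2).aestronglyMeasurable)
    rw [hηlaw s] at hmap
    rw [← hmap, gaussian_one_add_sq_moment hv, hcoe]
  constructor
  · intro x x0 t
    set f : ℕ → A → ℝ := fun s a => (φ * (1 + η s a)) ^ 2 with hf_def
    have hfmeas : ∀ s, Measurable (f s) := fun s =>
      (measurable_const.mul (measurable_const.add (hηmeas s))).pow_const 2
    have hfind : iIndepFun f P := by
      have := hηindep.comp (fun _ (y : ℝ) => (φ * (1 + y)) ^ 2)
        (fun _ => (measurable_const.mul (measurable_const.add measurable_id)).pow_const 2)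
      exact this
    have hfint : ∀ s, ∫ a, f s a ∂P = φ ^ 2 * (1 + σ ^ 2) := by
      intro s
      have h1 : ∀ a, f s a = φ ^ 2 * (1 + η s a) ^ 2 := fun a => mul_pow _ _ _
      simp_rw [h1]
      rw [integral_const_mul, hmom s]
    have hD : ∀ t a, Xit t a x - Xit t a x0 =
        (∏ s ∈ Finset.Icc 1 t, (φ * (1 + η s a))) * (x - x0) := by
      intro t
      induction t with
      | zero => intro a; simp [hXit0]
      | succ n ih =>
        intro a
        rw [hXitS, hXitS,
          show (1 + η (n + 1) a) * ((1 - φ) * μ + φ * Xit n a x) -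
            (1 + η (n + 1) a) * ((1 - φ) * μ + φ * Xit n a x0) =
            (φ * (1 + η (n + 1) a)) * (Xit n a x - Xit n a x0) by ring,
          ih a, Finset.prod_Icc_succ_top (by omega)]
        ring
    have hprod : ∀ t, ∫ a, ∏ s ∈ Finset.Icc 1 t, f s a ∂P = (φ ^ 2 * (1 + σ ^ 2)) ^ t := by
      intro t
      induction t with
      | zero => simp
      | succ n ih =>
        have hind : IndepFun (f (n + 1)) (fun a => ∏ s ∈ Finset.Icc 1 n, f s a) P := by
          have h := hfind.indepFun_finsetProd_of_notMem hfmeas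
            (s := Finset.Icc 1 n) (i := n + 1) (by simp)
          have heq : (∏ j ∈ Finset.Icc 1 n, f j) = fun a => ∏ s ∈ Finset.Icc 1 n, f s a := by
            funext a; simp [Finset.prod_apply]
          exact (heq ▸ h).symm
        have hmul := hind.integral_mul_eq_mul_integral
          (hfmeas (n + 1)).aestronglyMeasurable
          ((Finset.measurable_prod _ fun i _ => hfmeas i).aestronglyMeasurable)
        have hI : ∀ a, ∏ s ∈ Finset.Icc 1 (n + 1), f s a =
            (f (n + 1) * fun a => ∏ s ∈ Finset.Icc 1 n, f s a) a := by
          intro a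
          rw [Finset.prod_Icc_succ_top (by omega)]
          simp [mul_comm]
        simp_rw [hI]
        rw [hmul, hfint, ih]
        ring
    have hsq : ∀ a, (Xit t a x - Xit t a x0) ^ 2 =
        (∏ s ∈ Finset.Icc 1 t, f s a) * (x - x0) ^ 2 := by
      intro a
      rw [hD t a, mul_pow, hf_def, ← Finset.prod_pow]
    simp_rw [hsq]
    rw [integral_mul_const, hprod t]
  · intro h
    have h1 : (0 : ℝ) < 1 + σ ^ 2 := by positivity
    have h2 : φ ^ 2 < ((1 + σ ^ 2) ^ (-(1/2) : ℝ)) ^ 2 := by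
      apply pow_lt_pow_left₀ h hφ.1 (by norm_num)
    have h3 : ((1 + σ ^ 2) ^ (-(1/2) : ℝ)) ^ 2 = (1 + σ ^ 2)⁻¹ := by
      rw [← Real.rpow_natCast ((1 + σ ^ 2) ^ (-(1/2) : ℝ)) 2, ← Real.rpow_mul h1.le]
      norm_num
      exact Real.rpow_neg_one _
    rw [h3] at h2
    calc φ ^ 2 * (1 + σ ^ 2) < (1 + σ ^ 2)⁻¹ * (1 + σ ^ 2) :=
          mul_lt_mul_of_pos_right h2 h1
      _ = 1 := inv_mul_cancel₀ h1.ne'
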